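/- Let d ≥ 2, L ≥ 1, X ⊆ ℤ^d, and f : X → ℝ^d be L-bilipschitz. Suppose there exists λ ≥ 1 such that every point of ℝ^d lies within distance λ of some point of X. Then there exists an injective extension F : ℤ^d → ℝ^d of f with Lip(F) ≤ 4λL and Lip(F⁻¹) ≤ 24λ²L√d. -/

import Mathlib

/-- The integer lattice `ℤ^d` inside `ℝ^d`. -/
def intLattice (d : ℕ) : Set (EuclideanSpace ℝ (Fin d)) :=
  {x | ∀ i, ∃ z : ℤ, x i = z}

lemma intLattice_sep {d : ℕ} {p q : EuclideanSpace ℝ (Fin d)}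
    (hp : p ∈ intLattice d) (hq : q ∈ intLattice d) (hne : p ≠ q) :
    1 ≤ dist p q := by
  obtain ⟨i, hi⟩ : ∃ i, p i ≠ q i := by
    by_contra h
    push_neg at h
    exact hne (PiLp.ext h)
  obtain ⟨zp, hzp⟩ := hp i
  obtain ⟨zq, hzq⟩ := hq i
  have h1 : (1 : ℝ) ≤ dist (p i) (q i) := by
    rw [Real.dist_eq, hzp, hzq]
    have hz : zp ≠ zq := by
      rintro rfl; exact hi (hzp.trans hzq.symm)
    have := Int.one_le_abs (sub_ne_zero.mpr hz)
    calc (1 : ℝ) ≤ (|zp - zq| : ℤ) := by exact_mod_cast this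
      _ = |(zp : ℝ) - (zq : ℝ)| := by push_cast [Int.cast_abs]; ring_nf
  refine h1.trans ?_
  have h2 : dist (p i) (q i) ^ 2 ≤ ∑ j, dist (p j) (q j) ^ 2 := by
    apply Finset.single_le_sum (f := fun j => dist (p j) (q j) ^ 2)
    · intro j _; positivity
    · exact Finset.mem_univ i
  calc dist (p i) (q i) = Real.sqrt (dist (p i) (q i) ^ 2) := (Real.sqrt_sq dist_nonneg).symm
    _ ≤ Real.sqrt (∑ j, dist (p j) (q j) ^ 2) := Real.sqrt_le_sqrt h2
    _ = dist p q := (EuclideanSpace.dist_eq p q).symm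

set_option maxHeartbeats 1000000 in
theorem stmt_8 (d : ℕ) (hd : 2 ≤ d) (L lam : ℝ) (hL : 1 ≤ L) (hlam : 1 ≤ lam)
    (X : Set (EuclideanSpace ℝ (Fin d))) (hX : X ⊆ intLattice d)
    (f : EuclideanSpace ℝ (Fin d) → EuclideanSpace ℝ (Fin d))
    (hf : ∀ x ∈ X, ∀ y ∈ X,
      L⁻¹ * dist x y ≤ dist (f x) (f y) ∧ dist (f x) (f y) ≤ L * dist x y)
    (hnet : ∀ p : EuclideanSpace ℝ (Fin d), ∃ x ∈ X, dist p x ≤ lam) :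
    ∃ F : EuclideanSpace ℝ (Fin d) → EuclideanSpace ℝ (Fin d),
      (∀ x ∈ X, F x = f x) ∧
      Set.InjOn F (intLattice d) ∧
      (∀ p ∈ intLattice d, ∀ q ∈ intLattice d,
        dist (F p) (F q) ≤ 4 * lam * L * dist p q) ∧
      (∀ p ∈ intLattice d, ∀ q ∈ intLattice d,
        dist p q ≤ 24 * lam ^ 2 * L * Real.sqrt d * dist (F p) (F q)) := by
  classical
  have hL0 : (0 : ℝ) < L := by linarith
  have hlam0 : (0 : ℝ) < lam := by linarith
  -- nearest-net-point selection
  set n : EuclideanSpace ℝ (Fin d) → EuclideanSpace ℝ (Fin d) :=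
    fun p => if h : p ∈ X then p else (hnet p).choose with hn
  have hnX : ∀ p, n p ∈ X := by
    intro p
    by_cases h : p ∈ X
    · simpa [hn, h]
    · simpa [hn, h] using (hnet p).choose_spec.1
  have hnd : ∀ p, dist p (n p) ≤ lam := by
    intro p
    by_cases h : p ∈ X
    · simp [hn, h]; linarith
    · simpa [hn, h] using (hnet p).choose_spec.2
  have hnfix : ∀ x ∈ X, n x = x := by
    intro x hx; simp [hn, hx]
  set c : ℝ := (4 * lam * L)⁻¹ with hc
  have hc0 : 0 < c := by positivity
  set F : EuclideanSpace ℝ (Fin d) → EuclideanSpace ℝ (Fin d) :=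
    fun p => f (n p) + c • (p - n p) with hF
  -- key distance bounds
  have hdistF : ∀ p q, F p - F q = (f (n p) - f (n q)) + c • ((p - n p) - (q - n q)) := by
    intro p q
    simp only [hF]
    module
  have hub : ∀ p q, dist (F p) (F q) ≤ dist (f (n p)) (f (n q)) + c * (2 * lam) := by
    intro p q
    rw [dist_eq_norm, hdistF]
    refine (norm_add_le _ _).trans ?_
    rw [← dist_eq_norm]
    gcongr
    rw [norm_smul, Real.norm_eq_abs, abs_of_pos hc0]
    have : ‖p - n p - (q - n q)‖ ≤ 2 * lam := by
      refine (norm_sub_le _ _).trans ?_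
      have h1 : ‖p - n p‖ ≤ lam := by rw [← dist_eq_norm]; exact hnd p
      have h2 : ‖q - n q‖ ≤ lam := by rw [← dist_eq_norm]; exact hnd q
      linarith
    calc c * ‖p - n p - (q - n q)‖ ≤ c * (2 * lam) := by
          exact mul_le_mul_of_nonneg_left this hc0.le
      _ = c * (2 * lam) := rfl
  have hlb : ∀ p q, dist (f (n p)) (f (n q)) - c * (2 * lam) ≤ dist (F p) (F q) := by
    intro p q
    have hkey : dist (F p) (F q) = ‖(f (n p) - f (n q)) + c • ((p - n p) - (q - n q))‖ := by
      rw [dist_eq_norm, hdistF]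
    have hfd : dist (f (n p)) (f (n q)) = ‖f (n p) - f (n q)‖ := dist_eq_norm _ _
    rw [hkey, hfd]
    have h1 : ‖c • ((p - n p) - (q - n q))‖ ≤ c * (2 * lam) := by
      rw [norm_smul, Real.norm_eq_abs, abs_of_pos hc0]
      have : ‖p - n p - (q - n q)‖ ≤ 2 * lam := by
        refine (norm_sub_le _ _).trans ?_
        have h1 : ‖p - n p‖ ≤ lam := by rw [← dist_eq_norm]; exact hnd p
        have h2 : ‖q - n q‖ ≤ lam := by rw [← dist_eq_norm]; exact hnd q
        linarith
      exact mul_le_mul_of_nonneg_left this hc0.le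
    have := norm_add_le (f (n p) - f (n q) + c • ((p - n p) - (q - n q)))
      (-(c • ((p - n p) - (q - n q))))
    simp only [add_neg_cancel_right, norm_neg] at this
    linarith
  have hc2lam : c * (2 * lam) = (2 * L)⁻¹ := by
    field_simp [hc]
    rw [hc]; field_simp; norm_num
  -- separation of F on distinct lattice points
  have hFsep : ∀ p ∈ intLattice d, ∀ q ∈ intLattice d, p ≠ q →
      c ≤ dist (F p) (F q) := by
    intro p hp q hq hne
    by_cases hnn : n p = n q
    · have heq : dist (F p) (F q) = c * dist p q := by
        rw [dist_eq_norm, hdistF, hnn]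
        simp only [sub_self, zero_add, sub_sub_sub_cancel_right, norm_smul,
          Real.norm_eq_abs, abs_of_pos hc0, dist_eq_norm]
      have h1 : 1 ≤ dist p q := intLattice_sep hp hq hne
      rw [heq]
      nlinarith
    · have hsep : 1 ≤ dist (n p) (n q) :=
        intLattice_sep (hX (hnX p)) (hX (hnX q)) hnn
      have hflb : L⁻¹ * dist (n p) (n q) ≤ dist (f (n p)) (f (n q)) :=
        (hf _ (hnX p) _ (hnX q)).1
      have h2 : L⁻¹ ≤ dist (f (n p)) (f (n q)) := by
        calc L⁻¹ = L⁻¹ * 1 := by ring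
          _ ≤ L⁻¹ * dist (n p) (n q) := by
              exact mul_le_mul_of_nonneg_left hsep (by positivity)
          _ ≤ _ := hflb
      have := hlb p q
      rw [hc2lam] at this
      have hcle : c ≤ (2 * L)⁻¹ := by
        rw [hc]
        apply inv_anti₀ (by positivity)
        nlinarith
      have hinv : L⁻¹ - (2 * L)⁻¹ = (2 * L)⁻¹ := by
        field_simp
        ring
      linarith
  refine ⟨F, ?_, ?_, ?_, ?_⟩
  · intro x hx
    simp [hF, hnfix x hx]
  · intro p hp q hq hfe
    by_contra hne
    have := hFsep p hp q hq hne
    rw [hfe, dist_self] at this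
    linarith
  · intro p hp q hq
    by_cases hpq : p = q
    · subst hpq; simp
    · have h1 : 1 ≤ dist p q := intLattice_sep hp hq hpq
      have h2 : dist (n p) (n q) ≤ dist p q + 2 * lam := by
        have h := dist_triangle4 (n p) p q (n q)
        have hp1 : dist (n p) p ≤ lam := by rw [dist_comm]; exact hnd p
        have hq1 : dist q (n q) ≤ lam := hnd q
        linarith
      have h3 : dist (f (n p)) (f (n q)) ≤ L * dist (n p) (n q) :=
        (hf _ (hnX p) _ (hnX q)).2
      have h4 := hub p q
      rw [hc2lam] at h4
      have h5 : (2 * L)⁻¹ ≤ 2⁻¹ := by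
        apply inv_anti₀ (by norm_num)
        linarith
      have h6 : dist (F p) (F q) ≤ L * (dist p q + 2 * lam) + 2⁻¹ := by
        have := mul_le_mul_of_nonneg_left h2 hL0.le
        linarith
      have e1 : 2 * lam * L ≤ 2 * lam * L * dist p q := by
        have := mul_le_mul_of_nonneg_left h1 (by positivity : (0:ℝ) ≤ 2 * lam * L)
        linarith
      have e2 : (2 : ℝ)⁻¹ ≤ lam * L * dist p q := by
        have h7 : (1:ℝ) * 1 ≤ (lam * L) * dist p q :=
          mul_le_mul (by nlinarith) h1 one_pos.le (by positivity)
        linarith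
      have e3 : L * dist p q ≤ lam * L * dist p q := by
        have h8 : L ≤ lam * L := by nlinarith
        have := mul_le_mul_of_nonneg_right h8 (dist_nonneg (x := p) (y := q))
        linarith
      linarith
  · clear_value n c F
    intro p hp q hq
    by_cases hpq : p = q
    · subst hpq; simp
    · have hD := hFsep p hp q hq hpq
      have hD0 : 0 < dist (F p) (F q) := lt_of_lt_of_le hc0 hD
      have h2 : dist p q ≤ dist (n p) (n q) + 2 * lam := by
        have h := dist_triangle4 p (n p) (n q) q
        have hp1 : dist p (n p) ≤ lam := hnd p
        have hq1 : dist (n q) q ≤ lam := by rw [dist_comm]; exact hnd q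
        linarith
      have h3 : L⁻¹ * dist (n p) (n q) ≤ dist (f (n p)) (f (n q)) :=
        (hf _ (hnX p) _ (hnX q)).1
      have h4 := hlb p q
      rw [hc2lam] at h4
      -- dist (n p) (n q) ≤ L * (dist F + (2L)⁻¹)
      have h5 : dist (n p) (n q) ≤ L * (dist (F p) (F q) + (2 * L)⁻¹) := by
        have ha : L⁻¹ * dist (n p) (n q) ≤ dist (F p) (F q) + (2 * L)⁻¹ := by linarith
        have hb := mul_le_mul_of_nonneg_left ha hL0.le
        rwa [← mul_assoc, mul_inv_cancel₀ hL0.ne', one_mul] at hb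
      have hL2inv : L * (2 * L)⁻¹ = 2⁻¹ := by
        field_simp
      have h6 : dist p q ≤ L * dist (F p) (F q) + 2⁻¹ + 2 * lam := by
        have := h5
        rw [mul_add, hL2inv] at this
        linarith
      -- now: 2⁻¹ + 2*lam ≤ (2⁻¹ + 2*lam) * (4*lam*L) * dist F, since c ≤ dist F
      have h7 : (2⁻¹ + 2 * lam) ≤ (2⁻¹ + 2 * lam) * (4 * lam * L) * dist (F p) (F q) := by
        have hcd : 1 ≤ 4 * lam * L * dist (F p) (F q) := by
          have h1 : c * (4 * lam * L) = 1 := by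
            rw [hc]; field_simp
          have h2 := mul_le_mul_of_nonneg_right hD (by positivity : (0:ℝ) ≤ 4 * lam * L)
          linarith
        have h3 := mul_le_mul_of_nonneg_left hcd (by linarith : (0:ℝ) ≤ 2⁻¹ + 2 * lam)
        linarith
      have hsd : 1 ≤ Real.sqrt d := by
        rw [show (1:ℝ) = Real.sqrt 1 by simp]
        apply Real.sqrt_le_sqrt
        have : (2:ℝ) ≤ d := by exact_mod_cast hd
        linarith
      have hA : L + (2⁻¹ + 2*lam) * (4*lam*L) ≤ 24 * lam^2 * L := by
        linarith [mul_nonneg (mul_nonneg hL0.le (by linarith : (0:ℝ) ≤ 3*lam+1))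
          (by linarith : (0:ℝ) ≤ lam - 1), mul_nonneg (sq_nonneg lam) hL0.le]
      have hfin : L + (2⁻¹ + 2*lam) * (4*lam*L) ≤ 24 * lam^2 * L * Real.sqrt d := by
        have hC : 24 * lam^2 * L ≤ 24 * lam^2 * L * Real.sqrt d := by
          linarith [mul_nonneg (by positivity : (0:ℝ) ≤ 24 * lam^2 * L)
            (by linarith : (0:ℝ) ≤ Real.sqrt d - 1)]
        linarith
      calc dist p q ≤ L * dist (F p) (F q) + (2⁻¹ + 2 * lam) := by linarith
        _ ≤ L * dist (F p) (F q) + (2⁻¹ + 2 * lam) * (4 * lam * L) * dist (F p) (F q) := by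
            linarith
        _ = (L + (2⁻¹ + 2*lam) * (4*lam*L)) * dist (F p) (F q) := by ring
        _ ≤ 24 * lam^2 * L * Real.sqrt d * dist (F p) (F q) := by
            exact mul_le_mul_of_nonneg_right hfin hD0.le
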